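/- Let $w_1, w_2 \geq 1$ be positive integers and $0 < \beta < 1$. Then the weighted Ising partition function of a single edge, $Z_w(z_1, z_2) = z_1^{w_1}z_2^{w_2} + \beta(z_1^{w_1} + z_2^{w_2}) + 1$, has no zeros with $|z_1| \geq 1$ and $|z_2| > 1$. -/

import Mathlib

lemma key_ineq (β : ℝ) (hβ0 : 0 < β) (hβ1 : β < 1) (b : ℂ) (hb : 1 < ‖b‖) :
    ‖(β : ℂ) * b + 1‖ < ‖b + (β : ℂ)‖ := by
  have h2 : Complex.normSq ((β : ℂ) * b + 1) < Complex.normSq (b + (β : ℂ)) := by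
    have hnb : Complex.normSq b = ‖b‖ ^ 2 := by
      rw [← Complex.sq_norm]
    have h1 : 1 < ‖b‖ ^ 2 := by nlinarith [hb]
    simp only [Complex.normSq_apply, Complex.add_re, Complex.add_im, Complex.mul_re,
      Complex.mul_im, Complex.ofReal_re, Complex.ofReal_im, Complex.one_re, Complex.one_im]
    have : b.re ^ 2 + b.im ^ 2 = ‖b‖ ^ 2 := by
      rw [← hnb]; simp [Complex.normSq_apply]; ring
    nlinarith [this, h1, mul_pos (show (0:ℝ) < 1 - β^2 by nlinarith) (show (0:ℝ) < b.re^2 + b.im^2 - 1 by nlinarith [this, h1])]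
  have := Real.sqrt_lt_sqrt (Complex.normSq_nonneg _) h2
  rwa [← Complex.norm_def, ← Complex.norm_def] at this

theorem stmt_1 (w₁ w₂ : ℕ) (hw₁ : 1 ≤ w₁) (hw₂ : 1 ≤ w₂) (β : ℝ)
    (hβ0 : 0 < β) (hβ1 : β < 1) (z₁ z₂ : ℂ) (hz₁ : 1 ≤ ‖z₁‖) (hz₂ : 1 < ‖z₂‖) :
    z₁ ^ w₁ * z₂ ^ w₂ + (β : ℂ) * (z₁ ^ w₁ + z₂ ^ w₂) + 1 ≠ 0 := by
  set a := z₁ ^ w₁ with ha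
  set b := z₂ ^ w₂ with hb
  have hna : 1 ≤ ‖a‖ := by
    rw [ha, norm_pow]; exact one_le_pow₀ hz₁
  have hnb : 1 < ‖b‖ := by
    rw [hb, norm_pow]; exact one_lt_pow₀ hz₂ (by omega)
  intro h
  have heq : a * (b + (β : ℂ)) = -((β : ℂ) * b + 1) := by ring_nf; linear_combination h
  have h1 : ‖a‖ * ‖b + (β : ℂ)‖ = ‖(β : ℂ) * b + 1‖ := by
    rw [← norm_mul, heq, norm_neg]
  have h2 := key_ineq β hβ0 hβ1 b hnb
  have h3 : ‖b + (β : ℂ)‖ ≤ ‖a‖ * ‖b + (β : ℂ)‖ :=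
    le_mul_of_one_le_left (norm_nonneg _) hna
  linarith
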